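/- arXiv:1212.2813 — 7 statements merged into one kernel-verified Lean document; each statement's English description precedes it below -/
import Mathlib

section
/- For every real number A with A ≥ 0 and every natural number N ≥ 1 such that A < 4N², setting q = A/(4N²), one has ∑_{l=N+1}^∞ (2l+1)·(A/(4l²))^l ≤ q^{N+1}·( 2q/(1−q)² + (2N+3)/(1−q) ). -/
/-- Quantitative tail bound: for `0 ≤ A < 4N²`, `N ≥ 1`, with `q = A/(4N²)`,
`∑_{l=N+1}^∞ (2l+1)(A/(4l²))^l ≤ q^{N+1}(2q/(1-q)^2 + (2N+3)/(1-q))`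
(the sum over `l ≥ N+1` is written via `l = N+1+k`). -/
theorem tail_closed_form_bound (A : ℝ) (hA : 0 ≤ A) (N : ℕ) (hN : 1 ≤ N)
    (hAN : A < 4 * (N : ℝ) ^ 2) (q : ℝ) (hq : q = A / (4 * (N : ℝ) ^ 2)) :
    (∑' k : ℕ,
        (2 * ((N : ℝ) + 1 + k) + 1) * (A / (4 * ((N : ℝ) + 1 + k) ^ 2)) ^ (N + 1 + k)) ≤
      q ^ (N + 1) * (2 * q / (1 - q) ^ 2 + (2 * (N : ℝ) + 3) / (1 - q)) := by
  have hNpos : (1:ℝ) ≤ (N:ℝ) := by exact_mod_cast hN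
  have hden : (0:ℝ) < 4 * (N:ℝ)^2 := by nlinarith
  have hq0 : 0 ≤ q := by rw [hq]; positivity
  have hq1 : q < 1 := by rw [hq]; exact (div_lt_one hden).mpr hAN
  have h1q : (0:ℝ) < 1 - q := by linarith
  -- termwise bound
  have hterm : ∀ k : ℕ,
      (2 * ((N : ℝ) + 1 + k) + 1) * (A / (4 * ((N : ℝ) + 1 + k) ^ 2)) ^ (N + 1 + k)
        ≤ (2 * ((N : ℝ) + 1 + k) + 1) * q ^ (N + 1 + k) := by
    intro k
    have hk : (0:ℝ) ≤ (k:ℝ) := Nat.cast_nonneg k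
    have hlr : (N:ℝ) ≤ (N:ℝ) + 1 + k := by linarith
    have hlrpos : (0:ℝ) < 4 * ((N:ℝ) + 1 + k)^2 := by nlinarith
    have hbase0 : 0 ≤ A / (4 * ((N:ℝ) + 1 + k)^2) := by positivity
    have hbase : A / (4 * ((N:ℝ) + 1 + k)^2) ≤ q := by
      rw [hq]
      apply div_le_div_of_nonneg_left hA hden
      nlinarith
    have hcoef : (0:ℝ) ≤ 2 * ((N : ℝ) + 1 + k) + 1 := by linarith
    exact mul_le_mul_of_nonneg_left (pow_le_pow_left₀ hbase0 hbase _) hcoef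
  have hqn : ‖q‖ < 1 := by rwa [Real.norm_eq_abs, abs_of_nonneg hq0]
  have hsum1 : Summable (fun k : ℕ => (k:ℝ) * q ^ k) :=
    (hasSum_coe_mul_geometric_of_norm_lt_one hqn).summable
  have hsum0 : Summable (fun k : ℕ => q ^ k) := summable_geometric_of_lt_one hq0 hq1
  have hgeq : ∀ k : ℕ, (2 * ((N : ℝ) + 1 + k) + 1) * q ^ (N + 1 + k)
      = q ^ (N + 1) * (2 * ((k:ℝ) * q ^ k)) + q ^ (N + 1) * ((2 * (N:ℝ) + 3) * q ^ k) := by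
    intro k
    rw [pow_add]
    ring
  have hs : Summable (fun k : ℕ => (2 * ((N : ℝ) + 1 + k) + 1) * q ^ (N + 1 + k)) := by
    apply Summable.congr (f := fun k : ℕ =>
      q ^ (N + 1) * (2 * ((k:ℝ) * q ^ k)) + q ^ (N + 1) * ((2 * (N:ℝ) + 3) * q ^ k))
    · exact ((hsum1.mul_left 2).mul_left _).add ((hsum0.mul_left _).mul_left _)
    · intro k; exact (hgeq k).symm
  have hLHS : Summable (fun k : ℕ =>
      (2 * ((N : ℝ) + 1 + k) + 1) * (A / (4 * ((N : ℝ) + 1 + k) ^ 2)) ^ (N + 1 + k)) := by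
    apply Summable.of_nonneg_of_le ?_ hterm hs
    intro k
    have hk : (0:ℝ) ≤ (k:ℝ) := Nat.cast_nonneg k
    have hlrpos : (0:ℝ) < 4 * ((N:ℝ) + 1 + k)^2 := by nlinarith
    positivity
  calc (∑' k : ℕ,
        (2 * ((N : ℝ) + 1 + k) + 1) * (A / (4 * ((N : ℝ) + 1 + k) ^ 2)) ^ (N + 1 + k))
      ≤ ∑' k : ℕ, (2 * ((N : ℝ) + 1 + k) + 1) * q ^ (N + 1 + k) :=
        Summable.tsum_le_tsum hterm hLHS hs
    _ = q ^ (N + 1) * (2 * q / (1 - q) ^ 2 + (2 * (N : ℝ) + 3) / (1 - q)) := by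
        rw [tsum_congr hgeq, Summable.tsum_add (((hsum1.mul_left 2).mul_left _))
          ((hsum0.mul_left _).mul_left _), tsum_mul_left, tsum_mul_left, tsum_mul_left,
          tsum_mul_left, tsum_coe_mul_geometric_of_norm_lt_one hqn,
          tsum_geometric_of_lt_one hq0 hq1]
        field_simp
end

section
/- For all real numbers z and l with 0 ≤ z ≤ l and 0 < l, one has ( z/(l + √(l² − z²)) )^l · exp( √(l² − z²) ) ≤ ( e·z/(2l) )^l, where e = exp 1. -/
/-- Single-factor relaxation of the Debye-type bound:
`(z/(l+√(l²−z²)))^l · e^{√(l²−z²)} ≤ (e z/(2l))^l` for `0 ≤ z ≤ l`, `0 < l`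
(real exponent: `x ^ l` is `Real.rpow`). -/
theorem debye_relaxation (z l : ℝ) (hz : 0 ≤ z) (hzl : z ≤ l) (hl : 0 < l) :
    (z / (l + Real.sqrt (l ^ 2 - z ^ 2))) ^ l * Real.exp (Real.sqrt (l ^ 2 - z ^ 2)) ≤
      (Real.exp 1 * z / (2 * l)) ^ l := by
  set s := Real.sqrt (l ^ 2 - z ^ 2) with hs
  have hs0 : 0 ≤ s := Real.sqrt_nonneg _
  have hsl : s ≤ l := by
    calc s ≤ Real.sqrt (l ^ 2) := Real.sqrt_le_sqrt (by nlinarith)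
    _ = l := Real.sqrt_sq hl.le
  have hls : 0 < l + s := by linarith
  have hE : 0 < Real.exp ((l - s) / l) := Real.exp_pos _
  -- key scalar inequality: 2l ≤ (l+s) * exp((l-s)/l)
  have hexp : (2 * l - s) / l ≤ Real.exp ((l - s) / l) := by
    have h := Real.add_one_le_exp ((l - s) / l)
    have : (l - s) / l + 1 = (2 * l - s) / l := by field_simp; ring
    linarith [this ▸ h]
  have hkey : 2 * l ≤ (l + s) * Real.exp ((l - s) / l) := by
    have h1 : (l + s) * ((2 * l - s) / l) ≤ (l + s) * Real.exp ((l - s) / l) :=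
      mul_le_mul_of_nonneg_left hexp hls.le
    have h2 : 2 * l ≤ (l + s) * ((2 * l - s) / l) := by
      have he : (l + s) * ((2 * l - s) / l) = (2 * l ^ 2 + l * s - s ^ 2) / l := by ring
      rw [he, le_div_iff₀ hl]
      nlinarith
    linarith
  -- base inequality
  have hbase : z / (l + s) ≤ z / (2 * l) * Real.exp ((l - s) / l) := by
    rw [div_le_iff₀ hls]
    have : z * (2 * l) ≤ z * ((l + s) * Real.exp ((l - s) / l)) :=
      mul_le_mul_of_nonneg_left hkey hz
    have h2l : (0:ℝ) < 2 * l := by linarith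
    rw [div_mul_eq_mul_div, div_mul_eq_mul_div, le_div_iff₀ h2l]
    nlinarith
  have hb0 : 0 ≤ z / (l + s) := div_nonneg hz hls.le
  have hpow : (z / (l + s)) ^ l ≤ (z / (2 * l) * Real.exp ((l - s) / l)) ^ l :=
    Real.rpow_le_rpow hb0 hbase hl.le
  have hsplit : (z / (2 * l) * Real.exp ((l - s) / l)) ^ l
      = (z / (2 * l)) ^ l * Real.exp (l - s) := by
    rw [Real.mul_rpow (by positivity) hE.le,
      Real.rpow_def_of_pos (Real.exp_pos _), Real.log_exp,
      div_mul_cancel₀ _ hl.ne']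
  calc (z / (l + s)) ^ l * Real.exp s
      ≤ (z / (2 * l)) ^ l * Real.exp (l - s) * Real.exp s := by
        rw [← hsplit]; exact mul_le_mul_of_nonneg_right hpow (Real.exp_pos _).le
    _ = (z / (2 * l)) ^ l * Real.exp l := by
        rw [mul_assoc, ← Real.exp_add]; ring_nf
    _ = (Real.exp 1 * z / (2 * l)) ^ l := by
        rw [mul_div_assoc, Real.mul_rpow (Real.exp_pos 1).le (by positivity),
          Real.exp_one_rpow, mul_comm]
end

section
/- For every real θ with 0 ≤ θ ≤ π/2, one has tan(θ/2) · exp(cos θ) ≤ (e/2) · sin θ, where e = exp 1, with the convention that both sides vanish at θ = 0 (interpreting the inequality for θ ∈ (0, π/2] and noting both sides are 0 at θ = 0). -/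
/-- Scalar trigonometric core estimate of the relaxation step:
`tan(θ/2) · e^{cos θ} ≤ (e/2) · sin θ` for `0 ≤ θ ≤ π/2`. -/
theorem tan_exp_cos_le (θ : ℝ) (h0 : 0 ≤ θ) (h1 : θ ≤ Real.pi / 2) :
    Real.tan (θ / 2) * Real.exp (Real.cos θ) ≤ (Real.exp 1 / 2) * Real.sin θ := by
  have hpi := Real.pi_pos
  have hc0 : 0 ≤ Real.cos θ :=
    Real.cos_nonneg_of_mem_Icc ⟨by linarith, h1⟩
  have hc1 : Real.cos θ ≤ 1 := Real.cos_le_one θ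
  have he : (2 : ℝ) ≤ Real.exp 1 := by
    have := Real.add_one_le_exp (1 : ℝ); linarith
  -- convexity: exp c ≤ (1-c) * exp 0 + c * exp 1 for c ∈ [0,1]
  have hconv : Real.exp (Real.cos θ)
      ≤ (1 - Real.cos θ) * Real.exp 0 + Real.cos θ * Real.exp 1 := by
    have := convexOn_exp.2 (Set.mem_univ (0 : ℝ)) (Set.mem_univ (1 : ℝ))
      (by linarith : (0:ℝ) ≤ 1 - Real.cos θ) hc0 (by ring)
    simpa [smul_eq_mul] using this
  have key : Real.exp (Real.cos θ) ≤ Real.exp 1 / 2 * (1 + Real.cos θ) := by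
    rw [Real.exp_zero] at hconv
    nlinarith [hconv]
  have hco : 0 < Real.cos (θ / 2) :=
    Real.cos_pos_of_mem_Ioo ⟨by linarith, by linarith⟩
  have hs : 0 ≤ Real.sin (θ / 2) :=
    Real.sin_nonneg_of_nonneg_of_le_pi (by linarith) (by linarith)
  have hsin : Real.sin θ = 2 * Real.sin (θ / 2) * Real.cos (θ / 2) := by
    have := Real.sin_two_mul (θ / 2)
    rw [show 2 * (θ / 2) = θ by ring] at this
    linarith
  have hcos : Real.cos θ = 2 * Real.cos (θ / 2) ^ 2 - 1 := by
    have := Real.cos_two_mul (θ / 2)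
    rw [show 2 * (θ / 2) = θ by ring] at this
    linarith
  have hE : Real.exp (Real.cos θ) ≤ Real.exp 1 * Real.cos (θ / 2) ^ 2 := by
    refine key.trans_eq ?_
    rw [hcos]; ring
  rw [Real.tan_eq_sin_div_cos, hsin, div_mul_eq_mul_div, div_le_iff₀ hco]
  nlinarith [mul_le_mul_of_nonneg_left hE hs]
end

section
/- For every natural number l ≥ 1 and every real z, define j_l(z) = z^l / (2^{l+1} · l!) · ∫_{-1}^{1} cos(z t) · (1 − t²)^l dt (the Poisson integral representation of the spherical Bessel function of the first kind). Then |j_l(z)| ≤ ( e·|z|/(2l) )^l, where e = exp 1. -/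
/-- Poisson integral representation of the spherical Bessel function of the first kind. -/
noncomputable def sphericalBessel (l : ℕ) (z : ℝ) : ℝ :=
  z ^ l / (2 ^ (l + 1) * l.factorial) *
    ∫ t in (-1 : ℝ)..1, Real.cos (z * t) * (1 - t ^ 2) ^ l

lemma pow_le_exp_mul_factorial (l : ℕ) : (l : ℝ) ^ l ≤ Real.exp l * l.factorial := by
  have h : (l : ℝ) ^ l / l.factorial ≤ Real.exp l := by
    calc (l : ℝ) ^ l / l.factorial
        ≤ ∑ i ∈ Finset.range (l + 1), (l : ℝ) ^ i / i.factorial := by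
          exact Finset.single_le_sum (f := fun i => (l : ℝ) ^ i / i.factorial)
            (fun i _ => by positivity) (Finset.self_mem_range_succ l)
      _ ≤ Real.exp l := Real.sum_le_exp_of_nonneg (Nat.cast_nonneg l) _
  have hf : (0 : ℝ) < l.factorial := by positivity
  calc (l : ℝ) ^ l = (l : ℝ) ^ l / l.factorial * l.factorial := by field_simp
    _ ≤ Real.exp l * l.factorial := by
        exact mul_le_mul_of_nonneg_right h hf.le

/-- Relaxed spherical Bessel bound: `|j_l(z)| ≤ (e |z|/(2l))^l` for `l ≥ 1`. -/
theorem sphericalBessel_le_exp (l : ℕ) (hl : 1 ≤ l) (z : ℝ) :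
    |sphericalBessel l z| ≤ (Real.exp 1 * |z| / (2 * (l : ℝ))) ^ l := by
  have hlpos : (0 : ℝ) < l := by exact_mod_cast hl
  have hint : |∫ t in (-1 : ℝ)..1, Real.cos (z * t) * (1 - t ^ 2) ^ l| ≤ 2 := by
    have := intervalIntegral.norm_integral_le_of_norm_le_const
      (a := (-1 : ℝ)) (b := 1) (C := 1)
      (f := fun t => Real.cos (z * t) * (1 - t ^ 2) ^ l) ?_
    · calc |∫ t in (-1 : ℝ)..1, Real.cos (z * t) * (1 - t ^ 2) ^ l|
          ≤ 1 * |1 - (-1 : ℝ)| := this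
        _ = 2 := by norm_num
    · intro x hx
      rw [Set.uIoc_of_le (by norm_num)] at hx
      have hx1 : -1 < x := hx.1
      have hx2 : x ≤ 1 := hx.2
      have h1 : |Real.cos (z * x)| ≤ 1 := Real.abs_cos_le_one _
      have h2 : |(1 - x ^ 2) ^ l| ≤ 1 := by
        rw [abs_pow]
        apply pow_le_one₀ (abs_nonneg _)
        rw [abs_le]
        constructor <;> nlinarith
      calc ‖Real.cos (z * x) * (1 - x ^ 2) ^ l‖
          = |Real.cos (z * x)| * |(1 - x ^ 2) ^ l| := abs_mul _ _
        _ ≤ 1 * 1 := mul_le_mul h1 h2 (abs_nonneg _) zero_le_one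
        _ = 1 := by ring
  have hfac : (0 : ℝ) < l.factorial := by positivity
  have key : |sphericalBessel l z| ≤ |z| ^ l / (2 ^ l * l.factorial) := by
    rw [sphericalBessel, abs_mul, abs_div]
    have : |z ^ l| = |z| ^ l := abs_pow z l
    rw [this]
    have hd : |(2 : ℝ) ^ (l + 1) * l.factorial| = 2 ^ (l + 1) * l.factorial := by
      rw [abs_of_pos]; positivity
    rw [hd]
    calc |z| ^ l / (2 ^ (l + 1) * l.factorial) * |∫ t in (-1 : ℝ)..1, Real.cos (z * t) * (1 - t ^ 2) ^ l|
        ≤ |z| ^ l / (2 ^ (l + 1) * l.factorial) * 2 :=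
          mul_le_mul_of_nonneg_left hint (by positivity)
      _ = |z| ^ l / (2 ^ l * l.factorial) := by
          rw [pow_succ]; field_simp
  refine key.trans ?_
  rw [div_pow, mul_pow, mul_pow]
  have hll : (l : ℝ) ^ l ≤ Real.exp 1 ^ l * l.factorial := by
    have := pow_le_exp_mul_factorial l
    rwa [show Real.exp (l : ℝ) = Real.exp 1 ^ l by
      rw [← Real.exp_nat_mul]; norm_num] at this
  rw [div_le_div_iff₀ (by positivity) (by positivity)]
  calc |z| ^ l * ((2:ℝ) ^ l * (l:ℝ) ^ l)
      ≤ |z| ^ l * (2 ^ l * (Real.exp 1 ^ l * l.factorial)) := by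
        apply mul_le_mul_of_nonneg_left _ (by positivity)
        exact mul_le_mul_of_nonneg_left hll (by positivity)
    _ = Real.exp 1 ^ l * |z| ^ l * (2 ^ l * l.factorial) := by ring
end

section
/- For all real numbers a and b, and with j_l(z) = z^l / (2^{l+1} · l!) · ∫_{-1}^{1} cos(z t) · (1 − t²)^l dt denoting the Poisson integral representation of the spherical Bessel function of the first kind, the function l ↦ (2l+1)·j_l(a)·j_l(b) is summable over the natural numbers l. -/
lemma sphericalBessel_abs_le (l : ℕ) (z : ℝ) :
    |sphericalBessel l z| ≤ |z| ^ l / (2 ^ l * l.factorial) := by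
  have hint : |∫ t in (-1 : ℝ)..1, Real.cos (z * t) * (1 - t ^ 2) ^ l| ≤ 1 * |(1 : ℝ) - (-1)| := by
    rw [← Real.norm_eq_abs]
    apply intervalIntegral.norm_integral_le_of_norm_le_const
    intro x hx
    rw [Set.uIoc_of_le (by norm_num : (-1:ℝ) ≤ 1)] at hx
    have h1 : x ^ 2 ≤ 1 := by nlinarith [hx.1, hx.2]
    have h0 : (0:ℝ) ≤ 1 - x ^ 2 := by linarith
    have hcos := Real.abs_cos_le_one (z * x)
    have hpow : |(1 - x ^ 2) ^ l| ≤ 1 := by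
      rw [abs_pow]
      apply pow_le_one₀ (abs_nonneg _)
      rw [abs_of_nonneg h0]; nlinarith [sq_nonneg x]
    calc ‖Real.cos (z * x) * (1 - x ^ 2) ^ l‖
        = |Real.cos (z * x)| * |(1 - x ^ 2) ^ l| := by rw [norm_mul]; rfl
      _ ≤ 1 * 1 := mul_le_mul hcos hpow (abs_nonneg _) zero_le_one
      _ = 1 := by ring
  have hfac : (0:ℝ) < (l.factorial : ℝ) := by exact_mod_cast l.factorial_pos
  unfold sphericalBessel
  rw [abs_mul, abs_div, abs_pow]
  have hden : |(2:ℝ) ^ (l + 1) * l.factorial| = 2 ^ (l + 1) * l.factorial := by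
    rw [abs_of_pos]; positivity
  rw [hden]
  have h2 : |(1:ℝ) - (-1)| = 2 := by norm_num
  rw [h2, one_mul] at hint
  calc |z| ^ l / (2 ^ (l + 1) * ↑l.factorial) * |∫ t in (-1:ℝ)..1, Real.cos (z*t) * (1 - t^2)^l|
      ≤ |z| ^ l / (2 ^ (l + 1) * ↑l.factorial) * 2 := by
        apply mul_le_mul_of_nonneg_left hint; positivity
    _ = |z| ^ l / (2 ^ l * ↑l.factorial) := by
        rw [pow_succ]; field_simp

/-- The series `∑_l (2l+1) j_l(a) j_l(b)` is (absolutely) summable. -/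
theorem summable_bessel_series (a b : ℝ) :
    Summable (fun l : ℕ => (2 * (l : ℝ) + 1) * sphericalBessel l a * sphericalBessel l b) := by
  set r : ℝ := |a| * |b| with hr
  have hsum : Summable (fun l : ℕ => 2 * (r ^ l / l.factorial)) :=
    (Real.summable_pow_div_factorial r).mul_left 2
  apply Summable.of_norm_bounded hsum
  intro l
  have hfac : (1:ℝ) ≤ (l.factorial : ℝ) := by exact_mod_cast l.factorial_pos
  have h2l : (2:ℝ) * l + 1 ≤ 2 * 2 ^ l := by
    have : (l:ℝ) + 1 ≤ 2 ^ l := by exact_mod_cast (Nat.lt_two_pow_self (n := l))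
    have h1 : (1:ℝ) ≤ 2 ^ l := one_le_pow₀ (by norm_num)
    linarith
  have ha := sphericalBessel_abs_le l a
  have hb := sphericalBessel_abs_le l b
  have hja : (0:ℝ) ≤ |sphericalBessel l a| := abs_nonneg _
  have hjb : (0:ℝ) ≤ |sphericalBessel l b| := abs_nonneg _
  have hpos : (0:ℝ) ≤ 2 * (l:ℝ) + 1 := by positivity
  calc ‖(2 * (l : ℝ) + 1) * sphericalBessel l a * sphericalBessel l b‖
      = (2 * (l:ℝ) + 1) * |sphericalBessel l a| * |sphericalBessel l b| := by
        rw [norm_mul, norm_mul]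
        congr 1
        · congr 1; rw [Real.norm_eq_abs, abs_of_nonneg hpos]
    _ ≤ (2 * 2 ^ l) * (|a| ^ l / (2 ^ l * l.factorial)) * (|b| ^ l / (2 ^ l * l.factorial)) := by
        apply mul_le_mul _ hb hjb (by positivity)
        apply mul_le_mul h2l ha hja (by positivity)
    _ = 2 * (r ^ l / ((l.factorial : ℝ) * l.factorial * 2 ^ l)) := by
        rw [hr, mul_pow]
        have : ((2:ℝ) ^ l) ≠ 0 := by positivity
        field_simp
    _ ≤ 2 * (r ^ l / l.factorial) := by
        have h1 : (1:ℝ) ≤ 2 ^ l := one_le_pow₀ (by norm_num)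
        gcongr
        nlinarith [hfac]
end

section
/- Let a, b ≥ 0 be real numbers, let N ≥ 1 be a natural number with e²·a·b < 4N² (e = exp 1), and set q = e²ab/(4N²). With j_l(z) = z^l / (2^{l+1} · l!) · ∫_{-1}^{1} cos(z t) · (1 − t²)^l dt denoting the Poisson integral representation of the spherical Bessel function of the first kind, the truncation residual satisfies | ∑_{l=N+1}^∞ (2l+1)·j_l(a)·j_l(b) | ≤ q^{N+1}·( 2q/(1−q)² + (2N+3)/(1−q) ). -/
lemma bessel_abs_le (l : ℕ) (z : ℝ) (hz : 0 ≤ z) :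
    |sphericalBessel l z| ≤ z ^ l / (2 ^ l * l.factorial) := by
  unfold sphericalBessel
  rw [abs_mul]
  have h1 : |∫ t in (-1:ℝ)..1, Real.cos (z*t) * (1 - t^2)^l| ≤ 1 * |(1:ℝ) - (-1)| := by
    rw [← Real.norm_eq_abs]
    apply intervalIntegral.norm_integral_le_of_norm_le_const
    intro x hx
    rw [Set.uIoc_of_le (by norm_num)] at hx
    have hx2 : x^2 ≤ 1 := by nlinarith [hx.1, hx.2]
    have h0 : (0:ℝ) ≤ 1 - x^2 := by linarith
    rw [Real.norm_eq_abs, abs_mul]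
    calc |Real.cos (z*x)| * |(1 - x^2)^l| ≤ 1 * 1 := by
          apply mul_le_mul (Real.abs_cos_le_one _) _ (abs_nonneg _) zero_le_one
          rw [abs_pow, abs_of_nonneg h0]
          exact pow_le_one₀ h0 (by nlinarith [sq_nonneg x])
      _ = 1 := by ring
  have h2 : |z ^ l / (2 ^ (l + 1) * l.factorial)| = z ^ l / (2 ^ (l + 1) * l.factorial) := by
    rw [abs_of_nonneg]; positivity
  rw [h2]
  have : (1:ℝ) * |(1:ℝ) - (-1)| = 2 := by norm_num
  rw [this] at h1
  calc z ^ l / (2 ^ (l + 1) * l.factorial) * |∫ t in (-1:ℝ)..1, Real.cos (z*t) * (1 - t^2)^l|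
      ≤ z ^ l / (2 ^ (l + 1) * l.factorial) * 2 := by
        apply mul_le_mul_of_nonneg_left h1; positivity
    _ = z ^ l / (2 ^ l * l.factorial) := by
        rw [pow_succ]; ring

lemma pow_le_factorial_mul_exp (l : ℕ) :
    (l:ℝ) ^ l ≤ l.factorial * Real.exp 1 ^ l := by
  rw [← Real.exp_nat_mul, mul_one]
  have h := Real.sum_le_exp_of_nonneg (x := (l:ℝ)) (Nat.cast_nonneg l) (l+1)
  have h2 : (l:ℝ)^l / l.factorial ≤ Real.exp l := by
    refine le_trans ?_ h
    exact Finset.single_le_sum (f := fun i => (l:ℝ)^i / i.factorial)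
      (fun i _ => by positivity) (Finset.self_mem_range_succ l)
  have hf : (0:ℝ) < l.factorial := by positivity
  calc (l:ℝ)^l = (l:ℝ)^l / l.factorial * l.factorial := by field_simp
    _ ≤ Real.exp l * l.factorial := by
        apply mul_le_mul_of_nonneg_right h2 hf.le
    _ = l.factorial * Real.exp l := by ring

/-- Concrete form of the paper's Theorem 4.1: for `a, b ≥ 0`, `N ≥ 1` with
`e²ab < 4N²` and `q = e²ab/(4N²)`, the truncation residual satisfies
`|∑_{l=N+1}^∞ (2l+1) j_l(a) j_l(b)| ≤ q^{N+1}(2q/(1-q)^2 + (2N+3)/(1-q))`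
(the sum over `l ≥ N+1` is written via `l = N+1+k`). -/
theorem truncation_residual_bound (a b : ℝ) (ha : 0 ≤ a) (hb : 0 ≤ b)
    (N : ℕ) (hN : 1 ≤ N) (h : Real.exp 1 ^ 2 * a * b < 4 * (N : ℝ) ^ 2)
    (q : ℝ) (hq : q = Real.exp 1 ^ 2 * a * b / (4 * (N : ℝ) ^ 2)) :
    |∑' k : ℕ, (2 * ((N : ℝ) + 1 + k) + 1) *
        sphericalBessel (N + 1 + k) a * sphericalBessel (N + 1 + k) b| ≤
      q ^ (N + 1) * (2 * q / (1 - q) ^ 2 + (2 * (N : ℝ) + 3) / (1 - q)) := by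
  have hNpos : (0:ℝ) < N := by exact_mod_cast hN
  have hden : (0:ℝ) < 4 * (N:ℝ)^2 := by positivity
  have hq0 : 0 ≤ q := by rw [hq]; positivity
  have hq1 : q < 1 := by rw [hq]; rw [div_lt_one hden]; exact h
  -- term bound
  have key : ∀ k : ℕ, |(2 * ((N : ℝ) + 1 + k) + 1) *
      sphericalBessel (N + 1 + k) a * sphericalBessel (N + 1 + k) b|
      ≤ (2 * ((N : ℝ) + 1 + k) + 1) * q ^ (N + 1 + k) := by
    intro k
    set l := N + 1 + k with hl
    have hcoef : (0:ℝ) ≤ 2 * ((N : ℝ) + 1 + k) + 1 := by positivity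
    rw [abs_mul, abs_mul, abs_of_nonneg hcoef, mul_assoc]
    apply mul_le_mul_of_nonneg_left _ hcoef
    have hlcast : ((N:ℝ) + 1 + k) = (l:ℝ) := by push_cast [hl]; ring
    have hja := bessel_abs_le l a ha
    have hjb := bessel_abs_le l b hb
    have hfac : (0:ℝ) < l.factorial := by positivity
    have hNl : (N:ℝ)^l ≤ l.factorial * Real.exp 1 ^ l := by
      refine le_trans ?_ (pow_le_factorial_mul_exp l)
      apply pow_le_pow_left₀ hNpos.le
      exact_mod_cast Nat.le_add_right N (1+k) |>.trans_eq (by omega)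
    calc |sphericalBessel l a| * |sphericalBessel l b|
        ≤ (a ^ l / (2 ^ l * l.factorial)) * (b ^ l / (2 ^ l * l.factorial)) := by
          apply mul_le_mul hja hjb (abs_nonneg _) (by positivity)
      _ ≤ q ^ l := by
          rw [hq, div_pow, div_mul_div_comm]
          rw [div_le_div_iff₀ (by positivity) (by positivity)]
          have h2 : ((N:ℝ)^l)^2 ≤ ((l.factorial:ℝ) * Real.exp 1 ^ l)^2 :=
            pow_le_pow_left₀ (by positivity) hNl 2
          have hrw : (4 * (N:ℝ)^2)^l = 4^l * ((N:ℝ)^l)^2 := by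
            rw [mul_pow, ← pow_mul, ← pow_mul, mul_comm 2 l]
          have hrw2 : (4:ℝ)^l = 2^l * 2^l := by
            rw [← mul_pow]; norm_num
          have hrw3 : (Real.exp 1 ^ 2)^l = (Real.exp 1 ^ l)^2 := by
            rw [← pow_mul, ← pow_mul, mul_comm 2 l]
          calc a ^ l * b ^ l * (4 * (N:ℝ)^2)^l
              = (a^l * b^l * 4^l) * ((N:ℝ)^l)^2 := by rw [hrw]; ring
            _ ≤ (a^l * b^l * 4^l) * ((l.factorial:ℝ) * Real.exp 1 ^ l)^2 :=
                mul_le_mul_of_nonneg_left h2 (by positivity)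
            _ = (Real.exp 1 ^ 2 * a * b)^l * (2 ^ l * ↑l.factorial * (2 ^ l * ↑l.factorial)) := by
                simp only [mul_pow]; rw [hrw2, hrw3]; ring
  -- the majorant sum
  set g : ℕ → ℝ := fun k => (2 * ((N : ℝ) + 1 + k) + 1) * q ^ (N + 1 + k) with hgdef
  have hqnorm : ‖q‖ < 1 := by rw [Real.norm_eq_abs, abs_of_nonneg hq0]; exact hq1
  have hs1 : HasSum (fun k : ℕ => (k : ℝ) * q ^ k) (q / (1 - q) ^ 2) :=
    hasSum_coe_mul_geometric_of_norm_lt_one hqnorm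
  have hs2 : HasSum (fun k : ℕ => q ^ k) (1 - q)⁻¹ := hasSum_geometric_of_lt_one hq0 hq1
  have hsg : HasSum g (q ^ (N + 1) * (2 * q / (1 - q) ^ 2 + (2 * (N : ℝ) + 3) / (1 - q))) := by
    have h3 := ((hs1.mul_left 2).add (hs2.mul_left (2 * (N : ℝ) + 3))).mul_left (q ^ (N + 1))
    have h4 : g = fun k : ℕ =>
        q ^ (N + 1) * (2 * ((k : ℝ) * q ^ k) + (2 * (N : ℝ) + 3) * q ^ k) := by
      funext k
      rw [hgdef]
      simp only []
      rw [pow_add]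
      ring
    rw [h4]
    convert h3 using 1
    · rfl
    ring
  have hg : Summable g := hsg.summable
  have habs : Summable (fun k : ℕ => |(2 * ((N : ℝ) + 1 + k) + 1) *
      sphericalBessel (N + 1 + k) a * sphericalBessel (N + 1 + k) b|) :=
    Summable.of_nonneg_of_le (fun k => abs_nonneg _) key hg
  have hf : Summable (fun k : ℕ => (2 * ((N : ℝ) + 1 + k) + 1) *
      sphericalBessel (N + 1 + k) a * sphericalBessel (N + 1 + k) b) :=
    habs.of_abs
  calc |∑' k : ℕ, (2 * ((N : ℝ) + 1 + k) + 1) *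
        sphericalBessel (N + 1 + k) a * sphericalBessel (N + 1 + k) b|
      ≤ ∑' k : ℕ, |(2 * ((N : ℝ) + 1 + k) + 1) *
        sphericalBessel (N + 1 + k) a * sphericalBessel (N + 1 + k) b| := by
        have habs' : Summable (fun k : ℕ => ‖(2 * ((N : ℝ) + 1 + k) + 1) *
            sphericalBessel (N + 1 + k) a * sphericalBessel (N + 1 + k) b‖) := by
          simpa only [Real.norm_eq_abs] using habs
        simpa only [Real.norm_eq_abs] using norm_tsum_le_tsum_norm habs'
    _ ≤ ∑' k : ℕ, g k := Summable.tsum_le_tsum key habs hg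
    _ = q ^ (N + 1) * (2 * q / (1 - q) ^ 2 + (2 * (N : ℝ) + 3) / (1 - q)) := hsg.tsum_eq
end

section
/- Let a, b ≥ 0 be real numbers and let r ∈ (0,1). With j_l(z) = z^l / (2^{l+1} · l!) · ∫_{-1}^{1} cos(z t) · (1 − t²)^l dt denoting the Poisson integral representation of the spherical Bessel function of the first kind, the sequence N ↦ r^{−N} · | ∑_{l=N+1}^∞ (2l+1)·j_l(a)·j_l(b) | converges to 0 as N → ∞; that is, the truncation residual decays to zero faster than any geometric sequence. -/
lemma two_add_one_le_three_pow (l : ℕ) : (2 * (l : ℝ) + 1) ≤ 3 ^ l := by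
  induction l with
  | zero => norm_num
  | succ n ih =>
    have h1 : (1:ℝ) ≤ 3 ^ n := one_le_pow₀ (by norm_num)
    push_cast
    rw [pow_succ]
    push_cast at ih
    nlinarith

lemma term_bound (a b : ℝ) (ha : 0 ≤ a) (hb : 0 ≤ b) (l : ℕ) :
    |(2 * (l:ℝ) + 1) * sphericalBessel l a * sphericalBessel l b| ≤
      (3 * (a * b / 4 + 1)) ^ l / l.factorial := by
  have hja := bessel_abs_le l a ha
  have hjb := bessel_abs_le l b hb
  have hfac : (1:ℝ) ≤ l.factorial := by exact_mod_cast l.factorial_pos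
  have hcoef : (0:ℝ) ≤ 2 * l + 1 := by positivity
  rw [abs_mul, abs_mul, abs_of_nonneg hcoef]
  have hA : (0:ℝ) ≤ a ^ l / (2 ^ l * l.factorial) := by positivity
  have hB : (0:ℝ) ≤ b ^ l / (2 ^ l * l.factorial) := by positivity
  calc (2 * (l:ℝ) + 1) * |sphericalBessel l a| * |sphericalBessel l b|
      ≤ (2 * (l:ℝ) + 1) * (a ^ l / (2 ^ l * l.factorial)) * (b ^ l / (2 ^ l * l.factorial)) := by
        apply mul_le_mul (mul_le_mul_of_nonneg_left hja hcoef) hjb (abs_nonneg _)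
        positivity
    _ = (2 * (l:ℝ) + 1) * ((a * b / 4) ^ l / ((l.factorial : ℝ) ^ 2)) := by
        have h4 : ((a * b / 4) ^ l : ℝ) = a ^ l * b ^ l / (2 ^ l * 2 ^ l) := by
          have : (2:ℝ) ^ l * 2 ^ l = 4 ^ l := by rw [← mul_pow]; norm_num
          rw [div_pow, mul_pow, this]
        rw [h4]; field_simp
    _ ≤ 3 ^ l * ((a * b / 4 + 1) ^ l / l.factorial) := by
        have h1 : ((a * b / 4) ^ l : ℝ) ≤ (a * b / 4 + 1) ^ l :=
          pow_le_pow_left₀ (by positivity) (by linarith) l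
        have h2 : ((l.factorial : ℝ)) ≤ (l.factorial : ℝ) ^ 2 := by nlinarith
        have h3 : (0:ℝ) < l.factorial := by linarith
        have h5 : (a * b / 4) ^ l / ((l.factorial : ℝ) ^ 2) ≤ (a * b / 4 + 1) ^ l / l.factorial :=
          div_le_div₀ (by positivity) h1 h3 h2
        have h6 := two_add_one_le_three_pow l
        have h7 : (0:ℝ) ≤ (a * b / 4 + 1) ^ l / l.factorial := by positivity
        have h8 : (0:ℝ) ≤ (a * b / 4) ^ l / ((l.factorial:ℝ))^2 := by positivity
        nlinarith
    _ = (3 * (a * b / 4 + 1)) ^ l / l.factorial := by rw [mul_pow]; ring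

set_option maxHeartbeats 1000000 in
/-- Superexponential decay of the truncation residual: for `a, b ≥ 0`, `r ∈ (0,1)`,
`r^{-N} |∑_{l=N+1}^∞ (2l+1) j_l(a) j_l(b)| → 0` as `N → ∞`
(the sum over `l ≥ N+1` is written via `l = N+1+k`). -/
theorem residual_superexponential_decay (a b : ℝ) (ha : 0 ≤ a) (hb : 0 ≤ b)
    (r : ℝ) (hr0 : 0 < r) (hr1 : r < 1) :
    Filter.Tendsto
      (fun N : ℕ => r ^ (-(N : ℤ)) *
        |∑' k : ℕ, (2 * ((N : ℝ) + 1 + k) + 1) *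
          sphericalBessel (N + 1 + k) a * sphericalBessel (N + 1 + k) b|)
      Filter.atTop (nhds 0) := by
  set C : ℝ := 3 * (a * b / 4 + 1) with hCdef
  have hC : 0 < C := by positivity
  have hsumexp : Summable (fun k : ℕ => C ^ k / k.factorial) :=
    Real.summable_pow_div_factorial C
  set E : ℝ := ∑' k : ℕ, C ^ k / k.factorial with hEdef
  have hE : 0 ≤ E := tsum_nonneg (fun k => by positivity)
  -- the dominating sequence
  set w : ℕ → ℝ := fun N => C * E * ((C / r) ^ N / N.factorial) with hwdef
  have hw : Filter.Tendsto w Filter.atTop (nhds 0) := by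
    have h0 : Filter.Tendsto (fun N : ℕ => (C / r) ^ N / N.factorial)
        Filter.atTop (nhds 0) := (Real.summable_pow_div_factorial (C / r)).tendsto_atTop_zero
    simpa using h0.const_mul (C * E)
  apply squeeze_zero (fun N => by positivity) _ hw
  intro N
  set f : ℕ → ℝ := fun k => (2 * ((N : ℝ) + 1 + k) + 1) *
      sphericalBessel (N + 1 + k) a * sphericalBessel (N + 1 + k) b with hfdef
  set g : ℕ → ℝ := fun k => C ^ (N + 1) / (N + 1).factorial * (C ^ k / k.factorial) with hgdef
  have hbound : ∀ k, |f k| ≤ g k := by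
    intro k
    have h1 : |f k| ≤ C ^ (N + 1 + k) / (N + 1 + k).factorial := by
      have := term_bound a b ha hb (N + 1 + k)
      have hc : ((N + 1 + k : ℕ) : ℝ) = (N : ℝ) + 1 + k := by push_cast; ring
      simpa [hfdef, hc] using this
    have h2 : C ^ (N + 1 + k) / ((N + 1 + k).factorial : ℝ) ≤ g k := by
      have hdvd := Nat.factorial_mul_factorial_dvd_factorial_add (N + 1) k
      have hle : ((N + 1).factorial * k.factorial : ℕ) ≤ (N + 1 + k).factorial :=
        Nat.le_of_dvd (N + 1 + k).factorial_pos hdvd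
      have hle' : ((N + 1).factorial * k.factorial : ℝ) ≤ ((N + 1 + k).factorial : ℝ) := by
        exact_mod_cast hle
      have hpos : (0:ℝ) < (N + 1).factorial * k.factorial := by
        positivity
      have h3 : C ^ (N + 1 + k) / ((N + 1 + k).factorial : ℝ) ≤
          C ^ (N + 1 + k) / ((N + 1).factorial * k.factorial : ℝ) :=
        div_le_div_of_nonneg_left (by positivity) hpos hle'
      calc C ^ (N + 1 + k) / ((N + 1 + k).factorial : ℝ)
          ≤ C ^ (N + 1 + k) / ((N + 1).factorial * k.factorial : ℝ) := h3
        _ = g k := by rw [hgdef, pow_add]; field_simp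
    exact h1.trans h2
  have hg : Summable g := hsumexp.mul_left _
  have habs : Summable (fun k => |f k|) :=
    Summable.of_nonneg_of_le (fun k => abs_nonneg _) hbound hg
  have hfs : Summable f := by
    refine Summable.of_norm ?_
    simpa [Real.norm_eq_abs] using habs
  have htsum : |∑' k, f k| ≤ C ^ (N + 1) / (N + 1).factorial * E := by
    have habs' : Summable (fun k => ‖f k‖) := by simpa [Real.norm_eq_abs] using habs
    calc |∑' k, f k| ≤ ∑' k, |f k| := by
          simpa [Real.norm_eq_abs] using norm_tsum_le_tsum_norm habs'
      _ ≤ ∑' k, g k := Summable.tsum_le_tsum hbound habs hg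
      _ = C ^ (N + 1) / (N + 1).factorial * E := by rw [hgdef, tsum_mul_left]
  have hzr : r ^ (-(N : ℤ)) = (r ^ N)⁻¹ := by
    rw [zpow_neg, zpow_natCast]
  have hrpow : (0:ℝ) < r ^ N := by positivity
  calc r ^ (-(N : ℤ)) * |∑' k, f k|
      ≤ (r ^ N)⁻¹ * (C ^ (N + 1) / (N + 1).factorial * E) := by
        rw [hzr]
        exact mul_le_mul_of_nonneg_left htsum (by positivity)
    _ = C * E * ((C / r) ^ N / (N + 1).factorial) := by
        rw [div_pow, pow_succ]
        field_simp
    _ ≤ w N := by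
        show C * E * ((C / r) ^ N / ((N + 1).factorial : ℝ)) ≤
          C * E * ((C / r) ^ N / (N.factorial : ℝ))
        have hNpos : (0:ℝ) < N.factorial := by exact_mod_cast N.factorial_pos
        gcongr
        omega
end
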